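/- arXiv:1508.03515 — 5 statements merged into one kernel-verified Lean document; each statement's English description precedes it below -/
import Mathlib

section
/- Let G be the 6-vertex graph obtained from a 4-cycle v_1 v_2 v_3 v_4 by subdividing the edge v_1 v_2 once and adding a new vertex adjacent to both v_1 and v_2. Then mad(G) = 7/3 and χ'_s(G) > 6. -/
open SimpleGraph

/-- Two distinct edges of `G` are *in conflict* (at distance at most two) if they share an
endpoint or are both incident to a common third edge of `G`. -/
def EdgeConflict {V : Type*} (G : SimpleGraph V) (e₁ e₂ : Sym2 V) : Prop :=
  e₁ ∈ G.edgeSet ∧ e₂ ∈ G.edgeSet ∧ e₁ ≠ e₂ ∧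
    ((∃ v, v ∈ e₁ ∧ v ∈ e₂) ∨
      ∃ e₃ ∈ G.edgeSet, e₃ ≠ e₁ ∧ e₃ ≠ e₂ ∧ (∃ v, v ∈ e₁ ∧ v ∈ e₃) ∧ ∃ w, w ∈ e₂ ∧ w ∈ e₃)

/-- A strong edge-coloring: edges at distance at most two receive distinct colors. -/
def IsStrongEdgeColoring {V α : Type*} (G : SimpleGraph V) (c : Sym2 V → α) : Prop :=
  ∀ e₁ e₂ : Sym2 V, EdgeConflict G e₁ e₂ → c e₁ ≠ c e₂

/-- The strong chromatic index: the least number of colors in a strong edge-coloring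
(`⊤` if no finite strong edge-coloring exists). -/
noncomputable def strongChromaticIndex {V : Type*} (G : SimpleGraph V) : ℕ∞ :=
  sInf {n : ℕ∞ | ∃ k : ℕ, n = (k : ℕ∞) ∧ ∃ c : Sym2 V → Fin k, IsStrongEdgeColoring G c}

/-- `mad(G) < q`: every subgraph `H` with at least one vertex satisfies `2|E(H)|/|V(H)| < q`. -/
def MadLT {V : Type*} (G : SimpleGraph V) (q : ℚ) : Prop :=
  ∀ H : G.Subgraph, H.verts.Nonempty → 2 * (H.edgeSet.ncard : ℚ) < q * (H.verts.ncard : ℚ)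

/-- `mad(G) = q`: the maximum of `2|E(H)|/|V(H)|` over nonempty subgraphs `H` equals `q`. -/
def MadEq {V : Type*} (G : SimpleGraph V) (q : ℚ) : Prop :=
  (∀ H : G.Subgraph, H.verts.Nonempty → 2 * (H.edgeSet.ncard : ℚ) ≤ q * (H.verts.ncard : ℚ)) ∧
    ∃ H : G.Subgraph, H.verts.Nonempty ∧ 2 * (H.edgeSet.ncard : ℚ) = q * (H.verts.ncard : ℚ)

/-- `G` contains a subgraph isomorphic to `H`. -/
def ContainsCopy {W V : Type*} (H : SimpleGraph W) (G : SimpleGraph V) : Prop :=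
  ∃ f : W → V, Function.Injective f ∧ ∀ a b : W, H.Adj a b → G.Adj (f a) (f b)

/-- `Sgraph k` is a `k`-cycle with a pendant edge attached at each vertex. -/
def Sgraph (k : ℕ) [NeZero k] : SimpleGraph (Fin k ⊕ Fin k) :=
  SimpleGraph.fromEdgeSet
    {e | ∃ i : Fin k, e = s(Sum.inl i, Sum.inl (i + 1)) ∨ e = s(Sum.inl i, Sum.inr i)}

/-- `S₄`: a `4`-cycle `0 1 2 3` with pendant edges at the adjacent vertices `0` and `1`. -/
def S4graph : SimpleGraph (Fin 6) :=
  SimpleGraph.fromEdgeSet {s(0, 1), s(1, 2), s(2, 3), s(3, 0), s(0, 4), s(1, 5)}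

/-- `v` is a vertex of the contracted graph `ct(G)`, i.e. `v` does not have degree `1`. -/
def InCt {V : Type*} (G : SimpleGraph V) (v : V) : Prop := (G.neighborSet v).ncard ≠ 1

/-- Adjacency in the contracted graph `ct(G)`. -/
def CtAdj {V : Type*} (G : SimpleGraph V) (u v : V) : Prop :=
  G.Adj u v ∧ InCt G u ∧ InCt G v

/-- The degree of a vertex in the contracted graph `ct(G)`. -/
noncomputable def ctDeg {V : Type*} (G : SimpleGraph V) (v : V) : ℕ :=
  {u | CtAdj G v u}.ncard

/-- A `2⊥`-vertex: a vertex of `ct(G)` of degree `2` in `ct(G)`. -/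
def IsTwoPerp {V : Type*} (G : SimpleGraph V) (v : V) : Prop :=
  InCt G v ∧ ctDeg G v = 2

/-- The set of edges of a path `p` with `n` edges. -/
def pathEdges {V : Type*} (n : ℕ) (p : Fin (n + 1) → V) : Set (Sym2 V) :=
  {e | ∃ i : Fin n, e = s(p i.castSucc, p i.succ)}

/-- A `t`-caterpillar: two vertices of degree at least `3` in `ct(G)` joined by a path
whose `t` internal vertices are all `2⊥`-vertices. -/
structure IsCaterpillar {V : Type*} (G : SimpleGraph V) (t : ℕ) (p : Fin (t + 2) → V) : Prop where
  inj : Function.Injective p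
  adj : ∀ i : Fin (t + 1), G.Adj (p i.castSucc) (p i.succ)
  end₀ : 3 ≤ ctDeg G (p 0)
  end₁ : 3 ≤ ctDeg G (p (Fin.last (t + 1)))
  internal : ∀ i : Fin (t + 2), i ≠ 0 → i ≠ Fin.last (t + 1) → IsTwoPerp G (p i)

/-- A path with `n` edges in the contracted graph `ct(G)` all of whose internal vertices
are `2⊥`-vertices. -/
structure IsCtPath {V : Type*} (G : SimpleGraph V) (n : ℕ) (p : Fin (n + 1) → V) : Prop where
  inj : Function.Injective p
  adj : ∀ i : Fin n, CtAdj G (p i.castSucc) (p i.succ)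
  internal : ∀ i : Fin (n + 1), i ≠ 0 → i ≠ Fin.last n → IsTwoPerp G (p i)

/-- No internal vertex of the path `p` lies on the path `q`. -/
def IntDisjoint {V : Type*} {m n : ℕ} (p : Fin (m + 1) → V) (q : Fin (n + 1) → V) : Prop :=
  ∀ i : Fin (m + 1), i ≠ 0 → i ≠ Fin.last m → ∀ j : Fin (n + 1), p i ≠ q j

/-- Two paths are internally disjoint. -/
def PDisj {V : Type*} {m n : ℕ} (p : Fin (m + 1) → V) (q : Fin (n + 1) → V) : Prop :=
  IntDisjoint p q ∧ IntDisjoint q p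

/-- The configuration `Y(t₁,t₂,t₃)`: a vertex `v` of degree at least `3` in `ct(G)` together
with three internally disjoint paths of lengths `t₁+1`, `t₂+1`, `t₃+1` in `ct(G)` with common
endpoint `v`, all of whose internal vertices are `2⊥`-vertices. -/
structure IsYConfig {V : Type*} (G : SimpleGraph V) (t₁ t₂ t₃ : ℕ) (v : V)
    (p₁ : Fin (t₁ + 2) → V) (p₂ : Fin (t₂ + 2) → V) (p₃ : Fin (t₃ + 2) → V) : Prop where
  deg : 3 ≤ ctDeg G v
  path₁ : IsCtPath G (t₁ + 1) p₁
  path₂ : IsCtPath G (t₂ + 1) p₂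
  path₃ : IsCtPath G (t₃ + 1) p₃
  start₁ : p₁ 0 = v
  start₂ : p₂ 0 = v
  start₃ : p₃ 0 = v
  disj₁₂ : PDisj p₁ p₂
  disj₁₃ : PDisj p₁ p₃
  disj₂₃ : PDisj p₂ p₃

/-- The configuration `H(t₁,t₂;r;s₁,s₂)`: two vertices `v`, `u` of degree `3` in `ct(G)` and
five internally disjoint paths in `ct(G)` whose internal vertices are `2⊥`-vertices: paths of
lengths `t₁+1`, `t₂+1` with endpoint `v`, a path of length `r+1` joining `v` and `u`, and
paths of lengths `s₁+1`, `s₂+1` with endpoint `u`. -/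
structure IsHConfig {V : Type*} (G : SimpleGraph V) (t₁ t₂ r s₁ s₂ : ℕ) (v u : V)
    (p₁ : Fin (t₁ + 2) → V) (p₂ : Fin (t₂ + 2) → V) (q : Fin (r + 2) → V)
    (p₃ : Fin (s₁ + 2) → V) (p₄ : Fin (s₂ + 2) → V) : Prop where
  degv : ctDeg G v = 3
  degu : ctDeg G u = 3
  path₁ : IsCtPath G (t₁ + 1) p₁
  path₂ : IsCtPath G (t₂ + 1) p₂
  pathq : IsCtPath G (r + 1) q
  path₃ : IsCtPath G (s₁ + 1) p₃
  path₄ : IsCtPath G (s₂ + 1) p₄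
  start₁ : p₁ 0 = v
  start₂ : p₂ 0 = v
  startq : q 0 = v
  endq : q (Fin.last (r + 1)) = u
  start₃ : p₃ 0 = u
  start₄ : p₄ 0 = u
  disj₁₂ : PDisj p₁ p₂
  disj₁q : PDisj p₁ q
  disj₁₃ : PDisj p₁ p₃
  disj₁₄ : PDisj p₁ p₄
  disj₂q : PDisj p₂ q
  disj₂₃ : PDisj p₂ p₃
  disj₂₄ : PDisj p₂ p₄
  disjq₃ : PDisj q p₃
  disjq₄ : PDisj q p₄
  disj₃₄ : PDisj p₃ p₄

/-- The configuration `Φ(t,a₁,a₂,s)`: two vertices `v`, `u` of degree `3` in `ct(G)` and four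
internally disjoint paths in `ct(G)` whose internal vertices are `2⊥`-vertices: a path of
length `t+1` with endpoint `v`, paths of lengths `a₁+1` and `a₂+1` joining `v` and `u`, and a
path of length `s+1` with endpoint `u`. -/
structure IsPhiConfig {V : Type*} (G : SimpleGraph V) (t a₁ a₂ s : ℕ) (v u : V)
    (pt : Fin (t + 2) → V) (pa : Fin (a₁ + 2) → V) (pb : Fin (a₂ + 2) → V)
    (ps : Fin (s + 2) → V) : Prop where
  degv : ctDeg G v = 3
  degu : ctDeg G u = 3
  patht : IsCtPath G (t + 1) pt
  patha : IsCtPath G (a₁ + 1) pa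
  pathb : IsCtPath G (a₂ + 1) pb
  paths : IsCtPath G (s + 1) ps
  startt : pt 0 = v
  starta : pa 0 = v
  enda : pa (Fin.last (a₁ + 1)) = u
  startb : pb 0 = v
  endb : pb (Fin.last (a₂ + 1)) = u
  starts : ps 0 = u
  disjtab : PDisj pt pa
  disjtb : PDisj pt pb
  disjts : PDisj pt ps
  disjab : PDisj pa pb
  disjas : PDisj pa ps
  disjbs : PDisj pb ps

/-- A set `D` of edges of `G` is `k`-reducible: there is `D' ⊆ D` such that any two edges of
`G - D'` at distance at most two in `G` are at distance at most two in `G - D'`, and every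
strong `k`-edge-coloring of `G - D'` extends to a strong `k`-edge-coloring of `G`. -/
def IsReducible {V : Type*} (G : SimpleGraph V) (D : Set (Sym2 V)) (k : ℕ) : Prop :=
  ∃ D' ⊆ D,
    (∀ e₁ e₂ : Sym2 V, e₁ ∈ (G.deleteEdges D').edgeSet → e₂ ∈ (G.deleteEdges D').edgeSet →
      EdgeConflict G e₁ e₂ → EdgeConflict (G.deleteEdges D') e₁ e₂) ∧
    ∀ c : Sym2 V → Fin k, IsStrongEdgeColoring (G.deleteEdges D') c →
      ∃ c' : Sym2 V → Fin k, IsStrongEdgeColoring G c' ∧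
        ∀ e ∈ (G.deleteEdges D').edgeSet, c' e = c e

/-- Every configuration `Y(t₁,t₂,t₃)` in `G` is `k`-reducible. -/
def YReducible {V : Type*} (G : SimpleGraph V) (t₁ t₂ t₃ k : ℕ) : Prop :=
  ∀ (v : V) (p₁ : Fin (t₁ + 2) → V) (p₂ : Fin (t₂ + 2) → V) (p₃ : Fin (t₃ + 2) → V),
    IsYConfig G t₁ t₂ t₃ v p₁ p₂ p₃ →
    IsReducible G (pathEdges (t₁ + 1) p₁ ∪ pathEdges (t₂ + 1) p₂ ∪ pathEdges (t₃ + 1) p₃) k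

/-- Every configuration `H(t₁,t₂;r;s₁,s₂)` in `G` is `k`-reducible. -/
def HReducible {V : Type*} (G : SimpleGraph V) (t₁ t₂ r s₁ s₂ k : ℕ) : Prop :=
  ∀ (v u : V) (p₁ : Fin (t₁ + 2) → V) (p₂ : Fin (t₂ + 2) → V) (q : Fin (r + 2) → V)
    (p₃ : Fin (s₁ + 2) → V) (p₄ : Fin (s₂ + 2) → V),
    IsHConfig G t₁ t₂ r s₁ s₂ v u p₁ p₂ q p₃ p₄ →
    IsReducible G (pathEdges (t₁ + 1) p₁ ∪ pathEdges (t₂ + 1) p₂ ∪ pathEdges (r + 1) q ∪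
      pathEdges (s₁ + 1) p₃ ∪ pathEdges (s₂ + 1) p₄) k

/-- Every configuration `Φ(t,a₁,a₂,s)` in `G` is `k`-reducible. -/
def PhiReducible {V : Type*} (G : SimpleGraph V) (t a₁ a₂ s k : ℕ) : Prop :=
  ∀ (v u : V) (pt : Fin (t + 2) → V) (pa : Fin (a₁ + 2) → V) (pb : Fin (a₂ + 2) → V)
    (ps : Fin (s + 2) → V),
    IsPhiConfig G t a₁ a₂ s v u pt pa pb ps →
    IsReducible G (pathEdges (t + 1) pt ∪ pathEdges (a₁ + 1) pa ∪ pathEdges (a₂ + 1) pb ∪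
      pathEdges (s + 1) ps) k

/-- A graph is 2-connected: connected, at least three vertices, and no cut vertex. -/
def TwoConnected {W : Type*} (H : SimpleGraph W) : Prop :=
  H.Connected ∧ 3 ≤ Nat.card W ∧ ∀ w : W, ((H.induce {x | x ≠ w}).Connected)

/-- `χ'_{ℓ,s}(G) ≤ k`: whenever each edge gets a list of at least `k` colors, there is a
strong edge-coloring choosing each edge's color from its list. -/
def StrongListChromaticIndexLE {V : Type*} (G : SimpleGraph V) (k : ℕ) : Prop :=
  ∀ (C : Type) (L : Sym2 V → Finset C), (∀ e ∈ G.edgeSet, k ≤ (L e).card) →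
    ∃ c : Sym2 V → C, (∀ e ∈ G.edgeSet, c e ∈ L e) ∧ IsStrongEdgeColoring G c

/-- The prism: two triangles joined by a perfect matching (`K₃ □ K₂`). -/
def prismGraph : SimpleGraph (Fin 6) :=
  SimpleGraph.fromEdgeSet
    {s(0, 1), s(1, 2), s(0, 2), s(3, 4), s(4, 5), s(3, 5), s(0, 3), s(1, 4), s(2, 5)}

/-- The vertex type of `ex₃(Θ(t₁,t₂,t₃))`: the branch vertices `x`, `y`, the internal vertices
of the three paths, and one pendant vertex for each internal vertex. -/
def ThetaExV (t : Fin 3 → ℕ) : Type :=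
  Fin 2 ⊕ (Σ i : Fin 3, Fin (t i)) ⊕ (Σ i : Fin 3, Fin (t i))

/-- `ex₃(Θ(t₁,t₂,t₃))`: two vertices `x = inl 0`, `y = inl 1` joined by three internally
disjoint paths of lengths `t 0 + 1`, `t 1 + 1`, `t 2 + 1`, with a pendant edge attached at
each internal (degree-2) vertex. -/
def ThetaEx (t : Fin 3 → ℕ) : SimpleGraph (ThetaExV t) :=
  SimpleGraph.fromEdgeSet
    ({e | ∃ i : Fin 3, t i = 0 ∧ e = s(Sum.inl 0, Sum.inl 1)} ∪
     {e | ∃ (i : Fin 3) (j : Fin (t i)), (j : ℕ) = 0 ∧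
        e = s(Sum.inl 0, Sum.inr (Sum.inl ⟨i, j⟩))} ∪
     {e | ∃ (i : Fin 3) (j k : Fin (t i)), (k : ℕ) = (j : ℕ) + 1 ∧
        e = s(Sum.inr (Sum.inl ⟨i, j⟩), Sum.inr (Sum.inl ⟨i, k⟩))} ∪
     {e | ∃ (i : Fin 3) (j : Fin (t i)), (j : ℕ) + 1 = t i ∧
        e = s(Sum.inr (Sum.inl ⟨i, j⟩), Sum.inl 1)} ∪
     {e | ∃ (i : Fin 3) (j : Fin (t i)),
        e = s(Sum.inr (Sum.inl ⟨i, j⟩), Sum.inr (Sum.inr ⟨i, j⟩))})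

/-- The graph of Figure 2: a 4-cycle `0 1 2 3` with the edge `0 1` subdivided by vertex `4`,
and a new vertex `5` adjacent to both `0` and `1`. -/
def houseGraph : SimpleGraph (Fin 6) :=
  SimpleGraph.fromEdgeSet {s(0, 4), s(4, 1), s(1, 2), s(2, 3), s(3, 0), s(0, 5), s(1, 5)}

/-- The graph of Figure 3: vertices `x = 0`, `y = 1` joined by internally disjoint paths
`0 2 1`, `0 3 1`, `0 4 5 1`, together with the path `2 6 7 3`. -/
def figThreeGraph : SimpleGraph (Fin 8) :=
  SimpleGraph.fromEdgeSet
    {s(0, 2), s(2, 1), s(0, 3), s(3, 1), s(0, 4), s(4, 5), s(5, 1), s(2, 6), s(6, 7), s(7, 3)}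


def houseEfin : Finset (Sym2 (Fin 6)) :=
  {s(0, 4), s(4, 1), s(1, 2), s(2, 3), s(3, 0), s(0, 5), s(1, 5)}

lemma houseGraph_edgeSet : houseGraph.edgeSet = ↑houseEfin := by
  refine Set.ext fun e => Sym2.ind (fun x y => ?_) e
  rw [SimpleGraph.mem_edgeSet]
  simp only [houseGraph, fromEdgeSet_adj, Set.mem_insert_iff, Set.mem_singleton_iff, houseEfin,
    Finset.mem_coe, Finset.mem_insert, Finset.mem_singleton]
  revert x y
  decide

lemma houseKeyNat : ∀ S : Finset (Fin 6),
    6 * (houseEfin.filter (fun e => ∀ v ∈ e, v ∈ S)).card ≤ 7 * S.card := by decide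

lemma houseConflict_all :
    ∀ e₁ ∈ houseEfin, ∀ e₂ ∈ houseEfin, e₁ ≠ e₂ → EdgeConflict houseGraph e₁ e₂ := by
  unfold EdgeConflict
  simp only [houseGraph_edgeSet, Finset.mem_coe]
  decide

theorem stmt4 : MadEq houseGraph (7/3) ∧ 6 < strongChromaticIndex houseGraph := by
  constructor
  · constructor
    · intro H _
      have hfin : H.verts.Finite := Set.toFinite _
      set S : Finset (Fin 6) := hfin.toFinset with hSdef
      have hV : H.verts.ncard = S.card := Set.ncard_eq_toFinset_card _ hfin
      have hsub : H.edgeSet ⊆ ↑(houseEfin.filter (fun e => ∀ v ∈ e, v ∈ S)) := by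
        intro e he
        simp only [Finset.coe_filter, Set.mem_setOf_eq]
        refine ⟨?_, ?_⟩
        · have := H.edgeSet_subset he
          rwa [houseGraph_edgeSet, Finset.mem_coe] at this
        · intro v hv
          rw [hSdef, Set.Finite.mem_toFinset]
          exact H.mem_verts_of_mem_edge he hv
      have hEle : H.edgeSet.ncard ≤ (houseEfin.filter (fun e => ∀ v ∈ e, v ∈ S)).card := by
        have := Set.ncard_le_ncard hsub (Finset.finite_toSet _)
        rwa [Set.ncard_coe_finset] at this
      have hkey := houseKeyNat S
      have h6 : 6 * H.edgeSet.ncard ≤ 7 * S.card := le_trans (by omega) hkey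
      rw [hV]
      have hc : (6 * H.edgeSet.ncard : ℚ) ≤ (7 * S.card : ℚ) := by exact_mod_cast h6
      push_cast at hc ⊢
      linarith
    · refine ⟨⊤, ⟨0, trivial⟩, ?_⟩
      have h1 : (⊤ : houseGraph.Subgraph).edgeSet.ncard = 7 := by
        rw [Subgraph.edgeSet_top, houseGraph_edgeSet, Set.ncard_coe_finset]
        decide
      have h2 : (⊤ : houseGraph.Subgraph).verts.ncard = 6 := by
        rw [Subgraph.verts_top, Set.ncard_univ, Nat.card_eq_fintype_card, Fintype.card_fin]
      rw [h1, h2]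
      norm_num
  · have h7 : (7 : ℕ∞) ≤ strongChromaticIndex houseGraph := by
      refine le_sInf ?_
      rintro n ⟨k, rfl, c, hc⟩
      have hinj : Set.InjOn c ↑houseEfin := by
        intro e₁ h1 e₂ h2 hceq
        by_contra hne
        exact hc e₁ e₂ (houseConflict_all e₁ h1 e₂ h2 hne) hceq
      have hcard : (houseEfin.image c).card = houseEfin.card :=
        Finset.card_image_of_injOn hinj
      have hle : (houseEfin.image c).card ≤ k := by
        have := Finset.card_le_card (Finset.subset_univ (houseEfin.image c))
        rwa [Finset.card_univ, Fintype.card_fin] at this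
      have h7k : 7 ≤ k := by
        have : houseEfin.card = 7 := by decide
        omega
      exact_mod_cast h7k
    exact lt_of_lt_of_le (by norm_num) h7
end

section
/- Let G be the 8-vertex graph consisting of two vertices x and y joined by three internally disjoint paths of lengths 2, 2 and 3, together with an additional path of length 3 (having two new internal vertices) joining the internal vertex of one of the length-2 paths to the internal vertex of the other length-2 path. Then mad(G) = 5/2 and χ'_s(G) > 7. -/
open SimpleGraph

def figEL : Finset (Sym2 (Fin 8)) :=
  {s(0, 2), s(2, 1), s(0, 3), s(3, 1), s(0, 4), s(4, 5), s(5, 1), s(2, 6), s(6, 7), s(7, 3)}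

lemma fig_adj_iff (a b : Fin 8) : figThreeGraph.Adj a b ↔ (s(a,b) ∈ figEL ∧ a ≠ b) := by
  simp [figThreeGraph, figEL, SimpleGraph.fromEdgeSet_adj]

lemma fig_edgeSet_eq : figThreeGraph.edgeSet = ↑figEL := by
  ext e
  induction e using Sym2.ind with
  | _ a b =>
    rw [SimpleGraph.mem_edgeSet, fig_adj_iff]
    simp only [Finset.mem_coe]
    revert a b; decide

def figEL8 : Finset (Sym2 (Fin 8)) :=
  {s(0, 2), s(2, 1), s(0, 3), s(3, 1), s(0, 4), s(5, 1), s(2, 6), s(7, 3)}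

set_option synthInstance.maxSize 400 in
set_option maxHeartbeats 1000000 in
lemma fig_conflicts : ∀ e₁ e₂ : Sym2 (Fin 8), e₁ ∈ figEL8 → e₂ ∈ figEL8 → e₁ ≠ e₂ →
    EdgeConflict figThreeGraph e₁ e₂ := by
  simp only [EdgeConflict, fig_edgeSet_eq, Finset.mem_coe]
  decide

set_option maxHeartbeats 4000000 in
set_option maxRecDepth 10000 in
lemma fig_madkey : ∀ S : Finset (Fin 8),
    4 * (figEL.filter (fun e => ∀ v ∈ e, v ∈ S)).card ≤ 5 * S.card := by decide

theorem stmt5 : MadEq figThreeGraph (5/2) ∧ 7 < strongChromaticIndex figThreeGraph := by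
  constructor
  · constructor
    · intro H _
      set S : Finset (Fin 8) := (Set.toFinite H.verts).toFinset with hSdef
      have hsub : H.edgeSet ⊆ ↑(figEL.filter (fun e => ∀ v ∈ e, v ∈ S)) := by
        intro e he
        simp only [Finset.coe_filter, Set.mem_setOf_eq, Finset.mem_coe]
        refine ⟨by rw [← Finset.mem_coe, ← fig_edgeSet_eq]; exact H.edgeSet_subset he, ?_⟩
        intro v hv
        induction e using Sym2.ind with
        | _ a b =>
          rw [SimpleGraph.Subgraph.mem_edgeSet] at he
          rw [hSdef, Set.Finite.mem_toFinset]
          rcases Sym2.mem_iff.mp hv with rfl | rfl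
          · exact he.fst_mem
          · exact he.snd_mem
      have hE : H.edgeSet.ncard ≤ (figEL.filter (fun e => ∀ v ∈ e, v ∈ S)).card := by
        have := Set.ncard_le_ncard hsub (Finset.finite_toSet _)
        rwa [Set.ncard_coe_finset] at this
      have hV : H.verts.ncard = S.card := by
        rw [hSdef]
        exact Set.ncard_eq_toFinset_card _ _
      have hk := fig_madkey S
      rw [hV]
      have h1 : (H.edgeSet.ncard : ℚ) ≤ ((figEL.filter (fun e => ∀ v ∈ e, v ∈ S)).card : ℚ) := by
        exact_mod_cast hE
      have h2 : 4 * ((figEL.filter (fun e => ∀ v ∈ e, v ∈ S)).card : ℚ) ≤ 5 * (S.card : ℚ) := by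
        exact_mod_cast hk
      linarith
    · refine ⟨⊤, ⟨0, trivial⟩, ?_⟩
      have hE : (⊤ : figThreeGraph.Subgraph).edgeSet.ncard = 10 := by
        rw [SimpleGraph.Subgraph.edgeSet_top, fig_edgeSet_eq, Set.ncard_coe_finset]
        decide
      have hV : (⊤ : figThreeGraph.Subgraph).verts.ncard = 8 := by
        show (Set.univ : Set (Fin 8)).ncard = 8
        rw [Set.ncard_univ]
        simp
      rw [hE, hV]
      norm_num
  · have h8 : (8 : ℕ∞) ≤ strongChromaticIndex figThreeGraph := by
      refine le_sInf ?_
      rintro n ⟨k, rfl, c, hc⟩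
      have hinj : ∀ x ∈ figEL8, ∀ y ∈ figEL8, c x = c y → x = y := by
        intro x hx y hy hcy
        by_contra hne
        exact hc x y (fig_conflicts x y hx hy hne) hcy
      have hcard : figEL8.card ≤ (Finset.univ : Finset (Fin k)).card :=
        Finset.card_le_card_of_injOn c (fun x _ => Finset.mem_univ _) hinj
      have : 8 ≤ k := by simpa [figEL8] using hcard
      exact_mod_cast this
    exact lt_of_lt_of_le (by norm_num) h8
end

section
/- Each of the graphs S_3, S_4 and S_7 satisfies mad(G) = 2 and χ'_s(G) ≥ 6. -/
open SimpleGraph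

/-! ### Auxiliary material -/

section Auxiliary

open Finset

instance SgraphAdjDec (k : ℕ) [NeZero k] : DecidableRel (Sgraph k).Adj := fun a b =>
  decidable_of_iff ((∃ i : Fin k, s(a,b) = s(Sum.inl i, Sum.inl (i + 1)) ∨
      s(a,b) = s(Sum.inl i, Sum.inr i)) ∧ a ≠ b)
    (by rw [Sgraph, SimpleGraph.fromEdgeSet_adj]; rfl)

instance SgraphEdgeDec (k : ℕ) [NeZero k] : DecidablePred (· ∈ (Sgraph k).edgeSet) := fun e =>
  e.recOnSubsingleton fun a b => decidable_of_iff ((Sgraph k).Adj a b)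
    (by rw [← SimpleGraph.mem_edgeSet])

instance S4AdjDec : DecidableRel S4graph.Adj := fun a b =>
  decidable_of_iff ((s(a,b) = s(0,1) ∨ s(a,b) = s(1,2) ∨ s(a,b) = s(2,3) ∨ s(a,b) = s(3,0) ∨
      s(a,b) = s(0,4) ∨ s(a,b) = s((1:Fin 6),(5:Fin 6))) ∧ a ≠ b)
    (by rw [S4graph, SimpleGraph.fromEdgeSet_adj]; simp [Set.mem_insert_iff])

instance S4EdgeDec : DecidablePred (· ∈ S4graph.edgeSet) := fun e =>
  e.recOnSubsingleton fun a b => decidable_of_iff (S4graph.Adj a b)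
    (by rw [← SimpleGraph.mem_edgeSet])

instance EdgeConflictDec {V : Type*} [Fintype V] [DecidableEq V] (G : SimpleGraph V)
    [DecidablePred (· ∈ G.edgeSet)] (e₁ e₂ : Sym2 V) : Decidable (EdgeConflict G e₁ e₂) := by
  unfold EdgeConflict; infer_instance

/-- Every subgraph has at most as many edges as vertices, given an "owner" map. -/
theorem subgraph_edge_le_vert {V : Type*} [Fintype V] {G : SimpleGraph V} (f : Sym2 V → V)
    (hmem : ∀ e ∈ G.edgeSet, f e ∈ e)
    (hinj : ∀ e₁ ∈ G.edgeSet, ∀ e₂ ∈ G.edgeSet, f e₁ = f e₂ → e₁ = e₂)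
    (H : G.Subgraph) : H.edgeSet.ncard ≤ H.verts.ncard := by
  have hsub := H.edgeSet_subset
  have himg : f '' H.edgeSet ⊆ H.verts := by
    rintro v ⟨e, he, rfl⟩
    exact SimpleGraph.Subgraph.mem_verts_of_mem_edge he (hmem e (hsub he))
  have h1 : (f '' H.edgeSet).ncard = H.edgeSet.ncard :=
    Set.ncard_image_of_injOn (fun e₁ h1 e₂ h2 => hinj e₁ (hsub h1) e₂ (hsub h2))
  rw [← h1]
  exact Set.ncard_le_ncard himg (Set.toFinite _)

theorem madEq_two {V : Type*} [Fintype V] [Nonempty V] (G : SimpleGraph V) (f : Sym2 V → V)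
    (hmem : ∀ e ∈ G.edgeSet, f e ∈ e)
    (hinj : ∀ e₁ ∈ G.edgeSet, ∀ e₂ ∈ G.edgeSet, f e₁ = f e₂ → e₁ = e₂)
    (hcard : G.edgeSet.ncard = Fintype.card V) :
    MadEq G 2 := by
  constructor
  · intro H _
    have h := subgraph_edge_le_vert f hmem hinj H
    have h' : (H.edgeSet.ncard : ℚ) ≤ (H.verts.ncard : ℚ) := by exact_mod_cast h
    linarith
  · refine ⟨⊤, by simp [SimpleGraph.Subgraph.verts_top], ?_⟩
    rw [SimpleGraph.Subgraph.edgeSet_top, SimpleGraph.Subgraph.verts_top, hcard,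
      Set.ncard_univ, Nat.card_eq_fintype_card]

theorem six_le_index {V : Type*} (G : SimpleGraph V)
    (h : ∀ (k : ℕ) (c : Sym2 V → Fin k), IsStrongEdgeColoring G c → 6 ≤ k) :
    6 ≤ strongChromaticIndex G := by
  apply le_sInf
  rintro n ⟨k, rfl, c, hc⟩
  exact_mod_cast h k c hc

theorem six_le_of_clique {V : Type*} {G : SimpleGraph V} (l : Fin 6 → Sym2 V)
    (hconf : ∀ i j : Fin 6, i ≠ j → EdgeConflict G (l i) (l j))
    (k : ℕ) (c : Sym2 V → Fin k) (hc : IsStrongEdgeColoring G c) : 6 ≤ k := by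
  have hinj : Function.Injective (fun i => c (l i)) := by
    intro i j h
    by_contra hne
    exact hc _ _ (hconf i j hne) h
  simpa using Fintype.card_le_of_injective _ hinj

/-! #### The graph `S₃` -/

def g3 : Fin 3 ⊕ Fin 3 → Fin 3 ⊕ Fin 3 → Fin 3 ⊕ Fin 3
  | Sum.inl i, Sum.inl j =>
      if j = i+1 then Sum.inl i else if i = j+1 then Sum.inl j else Sum.inl (min i j)
  | Sum.inl _, Sum.inr j => Sum.inr j
  | Sum.inr i, Sum.inl _ => Sum.inr i
  | Sum.inr i, Sum.inr j => Sum.inr (min i j)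

def f3 : Sym2 (Fin 3 ⊕ Fin 3) → Fin 3 ⊕ Fin 3 := Sym2.lift ⟨g3, by decide⟩

def l3 : Fin 6 → Sym2 (Fin 3 ⊕ Fin 3) :=
  ![s(Sum.inl 0, Sum.inl 1), s(Sum.inl 1, Sum.inl 2), s(Sum.inl 2, Sum.inl 0),
    s(Sum.inl 0, Sum.inr 0), s(Sum.inl 1, Sum.inr 1), s(Sum.inl 2, Sum.inr 2)]

set_option maxRecDepth 100000 in
theorem conf3 : ∀ i j : Fin 6, i ≠ j → EdgeConflict (Sgraph 3) (l3 i) (l3 j) := by decide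

set_option maxRecDepth 100000 in
theorem mad3 : MadEq (Sgraph 3) 2 := by
  apply madEq_two (Sgraph 3) f3
  · decide
  · have : ∀ e₁ ∈ (Sgraph 3).edgeSet, ∀ e₂ ∈ (Sgraph 3).edgeSet, f3 e₁ = f3 e₂ → e₁ = e₂ := by
      decide
    exact this
  · rw [Set.ncard_eq_toFinset_card']; decide

/-! #### The graph `S₄` -/

def g4 : Fin 6 → Fin 6 → Fin 6 := fun u v =>
  if (u=0∧v=1)∨(u=1∧v=0) then 0 else if (u=1∧v=2)∨(u=2∧v=1) then 1 else
  if (u=2∧v=3)∨(u=3∧v=2) then 2 else if (u=3∧v=0)∨(u=0∧v=3) then 3 else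
  if (u=0∧v=4)∨(u=4∧v=0) then 4 else if (u=1∧v=5)∨(u=5∧v=1) then 5 else 0

def f4 : Sym2 (Fin 6) → Fin 6 := Sym2.lift ⟨g4, by decide⟩

def l4 : Fin 6 → Sym2 (Fin 6) := ![s(0,1), s(1,2), s(2,3), s(3,0), s(0,4), s(1,5)]

set_option maxRecDepth 100000 in
theorem conf4 : ∀ i j : Fin 6, i ≠ j → EdgeConflict S4graph (l4 i) (l4 j) := by decide

set_option maxRecDepth 100000 in
theorem mad4 : MadEq S4graph 2 := by
  apply madEq_two S4graph f4
  · decide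
  · have : ∀ e₁ ∈ S4graph.edgeSet, ∀ e₂ ∈ S4graph.edgeSet, f4 e₁ = f4 e₂ → e₁ = e₂ := by
      decide
    exact this
  · rw [Set.ncard_eq_toFinset_card']; decide

/-! #### The graph `S₇` -/

def g7 : Fin 7 ⊕ Fin 7 → Fin 7 ⊕ Fin 7 → Fin 7 ⊕ Fin 7
  | Sum.inl i, Sum.inl j =>
      if j = i+1 then Sum.inl i else if i = j+1 then Sum.inl j else Sum.inl (min i j)
  | Sum.inl _, Sum.inr j => Sum.inr j
  | Sum.inr i, Sum.inl _ => Sum.inr i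
  | Sum.inr i, Sum.inr j => Sum.inr (min i j)

def f7 : Sym2 (Fin 7 ⊕ Fin 7) → Fin 7 ⊕ Fin 7 := Sym2.lift ⟨g7, by decide⟩

set_option maxRecDepth 400000 in
theorem mad7 : MadEq (Sgraph 7) 2 := by
  apply madEq_two (Sgraph 7) f7
  · decide
  · have : ∀ e₁ ∈ (Sgraph 7).edgeSet, ∀ e₂ ∈ (Sgraph 7).edgeSet, f7 e₁ = f7 e₂ → e₁ = e₂ := by
      decide
    exact this
  · rw [Set.ncard_eq_toFinset_card']; decide

def E7 (i : Fin 7) : Sym2 (Fin 7 ⊕ Fin 7) := s(Sum.inl i, Sum.inl (i+1))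
def P7 (i : Fin 7) : Sym2 (Fin 7 ⊕ Fin 7) := s(Sum.inl i, Sum.inr i)
def edg (i : Fin 7) : Fin 5 → Sym2 (Fin 7 ⊕ Fin 7) :=
  ![E7 i, E7 (i+1), E7 (i+2), P7 (i+1), P7 (i+2)]

set_option maxRecDepth 400000 in
theorem conf7 : ∀ i : Fin 7, ∀ j1 j2 : Fin 5, j1 ≠ j2 →
    EdgeConflict (Sgraph 7) (edg i j1) (edg i j2) := by decide

theorem s7_bound (k : ℕ) (c : Sym2 (Fin 7 ⊕ Fin 7) → Fin k)
    (hc : IsStrongEdgeColoring (Sgraph 7) c) : 6 ≤ k := by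
  by_contra hlt
  push_neg at hlt
  have KInj : ∀ i : Fin 7, Function.Injective (fun j => c (edg i j)) := by
    intro i j1 j2 h
    by_contra hne
    exact hc _ _ (conf7 i j1 j2 hne) h
  have h5 : 5 ≤ k := by simpa using Fintype.card_le_of_injective _ (KInj 0)
  have hk : k = 5 := by omega
  subst hk
  have KSurj : ∀ i : Fin 7, Function.Surjective (fun j => c (edg i j)) := fun i =>
    Finite.injective_iff_surjective.mp (KInj i)
  obtain ⟨i0, i1, hne01, heq01⟩ :=
    Fintype.exists_ne_map_eq_of_card_lt (fun i : Fin 7 => c (E7 i)) (by simp)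
  classical
  set x := c (E7 i0) with hx
  set A : Finset (Fin 7) := Finset.univ.filter (fun i => c (E7 i) = x) with hA
  set B : Finset (Fin 7) := Finset.univ.filter (fun i => c (P7 i) = x) with hB
  set T : Finset (Fin 7 × Fin 5) := Finset.univ.filter (fun p => c (edg p.1 p.2) = x) with hT
  have hTmem : ∀ p : Fin 7 × Fin 5, p ∈ T ↔ c (edg p.1 p.2) = x := by
    intro p; rw [hT]; simp
  -- row count
  have hrow : T.card = 7 := by
    rw [Finset.card_eq_sum_card_fiberwise (f := Prod.fst) (t := Finset.univ)
      (fun _ _ => Finset.mem_univ _)]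
    have hone : ∀ i : Fin 7, (T.filter fun p => p.1 = i).card = 1 := by
      intro i
      obtain ⟨j0, hj0⟩ := KSurj i x
      rw [Finset.card_eq_one]
      refine ⟨(i, j0), ?_⟩
      ext ⟨p1, p2⟩
      simp only [Finset.mem_filter, Finset.mem_singleton, hTmem, Prod.mk.injEq]
      constructor
      · rintro ⟨hcx, rfl⟩
        exact ⟨rfl, KInj p1 (hcx.trans hj0.symm)⟩
      · rintro ⟨rfl, rfl⟩
        exact ⟨hj0, rfl⟩
    simp [hone]
  -- column count
  have hf : ∀ (j : Fin 5) (S : Finset (Fin 7)), (∀ i : Fin 7, c (edg i j) = x ↔ i ∈ S) →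
      (T.filter fun p => p.2 = j).card = S.card := by
    intro j S hS
    apply Finset.card_nbij' Prod.fst (fun i => (i, j))
    · rintro ⟨p1, p2⟩ hp
      simp only [Finset.mem_coe, Finset.mem_filter, hTmem] at hp
      obtain ⟨h1, rfl⟩ := hp
      exact (hS p1).mp h1
    · intro i hi
      exact Finset.mem_filter.mpr ⟨(hTmem (i, j)).mpr ((hS i).mpr hi), rfl⟩
    · rintro ⟨p1, p2⟩ hp
      simp only [Finset.mem_coe, Finset.mem_filter, hTmem] at hp
      obtain ⟨_, rfl⟩ := hp
      rfl
    · intro i hi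
      rfl
  have hAd : ∀ d : Fin 7, (Finset.univ.filter fun i : Fin 7 => c (E7 (i + d)) = x).card
      = A.card := by
    intro d
    apply Finset.card_equiv (Equiv.addRight d)
    intro i
    simp only [Finset.mem_filter, Finset.mem_univ, true_and, Equiv.coe_addRight, hA]
  have hBd : ∀ d : Fin 7, (Finset.univ.filter fun i : Fin 7 => c (P7 (i + d)) = x).card
      = B.card := by
    intro d
    apply Finset.card_equiv (Equiv.addRight d)
    intro i
    simp only [Finset.mem_filter, Finset.mem_univ, true_and, Equiv.coe_addRight, hB]
  have hcol : T.card = 3 * A.card + 2 * B.card := by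
    rw [Finset.card_eq_sum_card_fiberwise (f := Prod.snd) (t := Finset.univ)
      (fun _ _ => Finset.mem_univ _), Fin.sum_univ_five]
    have e0 : (T.filter fun p => p.2 = 0).card = A.card := by
      rw [hf 0 A (fun i => by rw [show edg i 0 = E7 i from rfl, hA]; simp)]
    have e1 : (T.filter fun p => p.2 = 1).card = A.card := by
      rw [hf 1 (Finset.univ.filter fun i : Fin 7 => c (E7 (i + 1)) = x)
        (fun i => by rw [show edg i 1 = E7 (i+1) from rfl]; simp), hAd 1]
    have e2 : (T.filter fun p => p.2 = 2).card = A.card := by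
      rw [hf 2 (Finset.univ.filter fun i : Fin 7 => c (E7 (i + 2)) = x)
        (fun i => by rw [show edg i 2 = E7 (i+2) from rfl]; simp), hAd 2]
    have e3 : (T.filter fun p => p.2 = 3).card = B.card := by
      rw [hf 3 (Finset.univ.filter fun i : Fin 7 => c (P7 (i + 1)) = x)
        (fun i => by rw [show edg i 3 = P7 (i+1) from rfl]; simp), hBd 1]
    have e4 : (T.filter fun p => p.2 = 4).card = B.card := by
      rw [hf 4 (Finset.univ.filter fun i : Fin 7 => c (P7 (i + 2)) = x)
        (fun i => by rw [show edg i 4 = P7 (i+2) from rfl]; simp), hBd 2]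
    rw [e0, e1, e2, e3, e4]
    ring
  -- A has at least two elements
  have hi0 : i0 ∈ A := by rw [hA]; simp [hx]
  have hi1 : i1 ∈ A := by rw [hA]; simp; exact heq01.symm
  have hA2 : 2 ≤ A.card := by
    have hsub : ({i0, i1} : Finset (Fin 7)) ⊆ A := by
      intro t ht
      rcases Finset.mem_insert.mp ht with rfl | ht
      · exact hi0
      · rw [Finset.mem_singleton.mp ht]; exact hi1
    calc 2 = ({i0, i1} : Finset (Fin 7)).card := (Finset.card_pair hne01).symm
      _ ≤ A.card := Finset.card_le_card hsub
  omega

end Auxiliary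

theorem stmt6 :
    (MadEq (Sgraph 3) 2 ∧ 6 ≤ strongChromaticIndex (Sgraph 3)) ∧
    (MadEq S4graph 2 ∧ 6 ≤ strongChromaticIndex S4graph) ∧
    (MadEq (Sgraph 7) 2 ∧ 6 ≤ strongChromaticIndex (Sgraph 7)) := by
  refine ⟨⟨mad3, six_le_index _ (six_le_of_clique l3 conf3)⟩,
    ⟨mad4, six_le_index _ (six_le_of_clique l4 conf4)⟩,
    ⟨mad7, six_le_index _ s7_bound⟩⟩
end

section
/- For every graph G ∈ {S_3, S_4, S_7} and every edge e of G, the graph G − e obtained by deleting the edge e admits a strong edge-coloring using 5 colors; that is, χ'_s(G − e) ≤ 5. In particular, S_3, S_4 and S_7 are 6-critical with respect to the strong chromatic index. -/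
set_option maxRecDepth 40000
set_option maxHeartbeats 4000000


open SimpleGraph

abbrev L3 : Fin 3 → Fin 3 ⊕ Fin 3 := Sum.inl
abbrev R3 : Fin 3 → Fin 3 ⊕ Fin 3 := Sum.inr
abbrev L7 : Fin 7 → Fin 7 ⊕ Fin 7 := Sum.inl
abbrev R7 : Fin 7 → Fin 7 ⊕ Fin 7 := Sum.inr

instance (k : ℕ) [NeZero k] : DecidableRel (Sgraph k).Adj := fun _ _ =>
  decidable_of_iff' _ (SimpleGraph.fromEdgeSet_adj _)
instance : DecidableRel S4graph.Adj := fun _ _ =>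
  decidable_of_iff' _ (SimpleGraph.fromEdgeSet_adj _)
instance {V : Type*} [DecidableEq V] (G : SimpleGraph V) [DecidableRel G.Adj] (e : Sym2 V) :
    DecidableRel (G.deleteEdges {e}).Adj := fun _ _ =>
  decidable_of_iff' _ (SimpleGraph.deleteEdges_adj)

def ConflictF {V : Type*} (E : Finset (Sym2 V)) (e₁ e₂ : Sym2 V) : Prop :=
  e₁ ∈ E ∧ e₂ ∈ E ∧ e₁ ≠ e₂ ∧
    ((∃ v, v ∈ e₁ ∧ v ∈ e₂) ∨
      ∃ e₃ ∈ E, e₃ ≠ e₁ ∧ e₃ ≠ e₂ ∧ (∃ v, v ∈ e₁ ∧ v ∈ e₃) ∧ ∃ w, w ∈ e₂ ∧ w ∈ e₃)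

instance {V : Type*} [Fintype V] [DecidableEq V] (E : Finset (Sym2 V)) (e₁ e₂ : Sym2 V) :
    Decidable (ConflictF E e₁ e₂) := by unfold ConflictF; infer_instance

lemma strong_of_f {V α : Type*} [Fintype V] [DecidableEq V] (G : SimpleGraph V)
    (E : Finset (Sym2 V)) (hE : ∀ e, e ∈ E ↔ e ∈ G.edgeSet) (c : Sym2 V → α)
    (h : ∀ e₁ ∈ E, ∀ e₂ ∈ E, ConflictF E e₁ e₂ → c e₁ ≠ c e₂) :
    IsStrongEdgeColoring G c := by
  intro e₁ e₂ hc
  obtain ⟨h1, h2, h3, h4⟩ := hc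
  have m1 := (hE e₁).2 h1
  have m2 := (hE e₂).2 h2
  refine h e₁ m1 e₂ m2 ⟨m1, m2, h3, ?_⟩
  rcases h4 with h4 | ⟨e₃, he₃, hne⟩
  · exact Or.inl h4
  · exact Or.inr ⟨e₃, (hE e₃).2 he₃, hne⟩

lemma strong_of_erase {V α : Type*} [Fintype V] [DecidableEq V] (G : SimpleGraph V)
    (E : Finset (Sym2 V)) (hE : ∀ e, e ∈ E ↔ e ∈ G.edgeSet) (d : Sym2 V) (c : Sym2 V → α)
    (h : ∀ e₁ ∈ E.erase d, ∀ e₂ ∈ E.erase d, ConflictF (E.erase d) e₁ e₂ → c e₁ ≠ c e₂) :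
    IsStrongEdgeColoring (G.deleteEdges {d}) c := by
  refine strong_of_f _ (E.erase d) (fun e => ?_) c h
  rw [Finset.mem_erase, SimpleGraph.edgeSet_deleteEdges, Set.mem_diff, hE e,
    Set.mem_singleton_iff]
  tauto

lemma sci_le5 {V : Type*} (G : SimpleGraph V) (c : Sym2 V → Fin 5)
    (h : IsStrongEdgeColoring G c) : strongChromaticIndex G ≤ 5 :=
  sInf_le ⟨5, by norm_num, c, h⟩


def ES3 : Finset (Sym2 (Fin 3 ⊕ Fin 3)) := {s(L3 0, L3 1), s(L3 1, L3 2), s(L3 2, L3 0), s(L3 0, R3 0), s(L3 1, R3 1), s(L3 2, R3 2)}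

lemma hES3 : ∀ e, e ∈ ES3 ↔ e ∈ (Sgraph 3).edgeSet := by decide

def cS3_0 : Sym2 (Fin 3 ⊕ Fin 3) → Fin 5 := fun e =>
  if e = s(L3 1, L3 2) then 0 else if e = s(L3 2, L3 0) then 1 else if e = s(L3 0, R3 0) then 2 else if e = s(L3 1, R3 1) then 2 else if e = s(L3 2, R3 2) then 3 else 0

def cS3_1 : Sym2 (Fin 3 ⊕ Fin 3) → Fin 5 := fun e =>
  if e = s(L3 0, L3 1) then 0 else if e = s(L3 2, L3 0) then 1 else if e = s(L3 0, R3 0) then 2 else if e = s(L3 1, R3 1) then 3 else if e = s(L3 2, R3 2) then 3 else 0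

def cS3_2 : Sym2 (Fin 3 ⊕ Fin 3) → Fin 5 := fun e =>
  if e = s(L3 0, L3 1) then 0 else if e = s(L3 1, L3 2) then 1 else if e = s(L3 0, R3 0) then 2 else if e = s(L3 1, R3 1) then 3 else if e = s(L3 2, R3 2) then 2 else 0

def cS3_3 : Sym2 (Fin 3 ⊕ Fin 3) → Fin 5 := fun e =>
  if e = s(L3 0, L3 1) then 0 else if e = s(L3 1, L3 2) then 1 else if e = s(L3 2, L3 0) then 2 else if e = s(L3 1, R3 1) then 3 else if e = s(L3 2, R3 2) then 4 else 0

def cS3_4 : Sym2 (Fin 3 ⊕ Fin 3) → Fin 5 := fun e =>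
  if e = s(L3 0, L3 1) then 0 else if e = s(L3 1, L3 2) then 1 else if e = s(L3 2, L3 0) then 2 else if e = s(L3 0, R3 0) then 3 else if e = s(L3 2, R3 2) then 4 else 0

def cS3_5 : Sym2 (Fin 3 ⊕ Fin 3) → Fin 5 := fun e =>
  if e = s(L3 0, L3 1) then 0 else if e = s(L3 1, L3 2) then 1 else if e = s(L3 2, L3 0) then 2 else if e = s(L3 0, R3 0) then 3 else if e = s(L3 1, R3 1) then 4 else 0

def ES4 : Finset (Sym2 (Fin 6)) := {s(0, 1), s(1, 2), s(2, 3), s(3, 0), s(0, 4), s(1, 5)}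

lemma hES4 : ∀ e, e ∈ ES4 ↔ e ∈ (S4graph).edgeSet := by decide

def cS4_0 : Sym2 (Fin 6) → Fin 5 := fun e =>
  if e = s(1, 2) then 0 else if e = s(2, 3) then 1 else if e = s(3, 0) then 2 else if e = s(0, 4) then 0 else if e = s(1, 5) then 2 else 0

def cS4_1 : Sym2 (Fin 6) → Fin 5 := fun e =>
  if e = s(0, 1) then 0 else if e = s(2, 3) then 1 else if e = s(3, 0) then 2 else if e = s(0, 4) then 3 else if e = s(1, 5) then 1 else 0

def cS4_2 : Sym2 (Fin 6) → Fin 5 := fun e =>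
  if e = s(0, 1) then 0 else if e = s(1, 2) then 1 else if e = s(3, 0) then 2 else if e = s(0, 4) then 3 else if e = s(1, 5) then 4 else 0

def cS4_3 : Sym2 (Fin 6) → Fin 5 := fun e =>
  if e = s(0, 1) then 0 else if e = s(1, 2) then 1 else if e = s(2, 3) then 2 else if e = s(0, 4) then 2 else if e = s(1, 5) then 3 else 0

def cS4_4 : Sym2 (Fin 6) → Fin 5 := fun e =>
  if e = s(0, 1) then 0 else if e = s(1, 2) then 1 else if e = s(2, 3) then 2 else if e = s(3, 0) then 3 else if e = s(1, 5) then 4 else 0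

def cS4_5 : Sym2 (Fin 6) → Fin 5 := fun e =>
  if e = s(0, 1) then 0 else if e = s(1, 2) then 1 else if e = s(2, 3) then 2 else if e = s(3, 0) then 3 else if e = s(0, 4) then 4 else 0

def ES7 : Finset (Sym2 (Fin 7 ⊕ Fin 7)) := {s(L7 0, L7 1), s(L7 1, L7 2), s(L7 2, L7 3), s(L7 3, L7 4), s(L7 4, L7 5), s(L7 5, L7 6), s(L7 6, L7 0), s(L7 0, R7 0), s(L7 1, R7 1), s(L7 2, R7 2), s(L7 3, R7 3), s(L7 4, R7 4), s(L7 5, R7 5), s(L7 6, R7 6)}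

lemma hES7 : ∀ e, e ∈ ES7 ↔ e ∈ (Sgraph 7).edgeSet := by decide

def cS7_0 : Sym2 (Fin 7 ⊕ Fin 7) → Fin 5 := fun e =>
  if e = s(L7 1, L7 2) then 0 else if e = s(L7 2, L7 3) then 1 else if e = s(L7 3, L7 4) then 2 else if e = s(L7 4, L7 5) then 0 else if e = s(L7 5, L7 6) then 1 else if e = s(L7 6, L7 0) then 2 else if e = s(L7 0, R7 0) then 0 else if e = s(L7 1, R7 1) then 2 else if e = s(L7 2, R7 2) then 3 else if e = s(L7 3, R7 3) then 4 else if e = s(L7 4, R7 4) then 3 else if e = s(L7 5, R7 5) then 4 else if e = s(L7 6, R7 6) then 3 else 0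

def cS7_1 : Sym2 (Fin 7 ⊕ Fin 7) → Fin 5 := fun e =>
  if e = s(L7 0, L7 1) then 0 else if e = s(L7 2, L7 3) then 0 else if e = s(L7 3, L7 4) then 1 else if e = s(L7 4, L7 5) then 2 else if e = s(L7 5, L7 6) then 3 else if e = s(L7 6, L7 0) then 1 else if e = s(L7 0, R7 0) then 2 else if e = s(L7 1, R7 1) then 3 else if e = s(L7 2, R7 2) then 2 else if e = s(L7 3, R7 3) then 3 else if e = s(L7 4, R7 4) then 4 else if e = s(L7 5, R7 5) then 0 else if e = s(L7 6, R7 6) then 4 else 0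

def cS7_2 : Sym2 (Fin 7 ⊕ Fin 7) → Fin 5 := fun e =>
  if e = s(L7 0, L7 1) then 0 else if e = s(L7 1, L7 2) then 1 else if e = s(L7 3, L7 4) then 1 else if e = s(L7 4, L7 5) then 0 else if e = s(L7 5, L7 6) then 2 else if e = s(L7 6, L7 0) then 3 else if e = s(L7 0, R7 0) then 4 else if e = s(L7 1, R7 1) then 2 else if e = s(L7 2, R7 2) then 3 else if e = s(L7 3, R7 3) then 2 else if e = s(L7 4, R7 4) then 3 else if e = s(L7 5, R7 5) then 4 else if e = s(L7 6, R7 6) then 1 else 0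

def cS7_3 : Sym2 (Fin 7 ⊕ Fin 7) → Fin 5 := fun e =>
  if e = s(L7 0, L7 1) then 0 else if e = s(L7 1, L7 2) then 1 else if e = s(L7 2, L7 3) then 2 else if e = s(L7 4, L7 5) then 0 else if e = s(L7 5, L7 6) then 1 else if e = s(L7 6, L7 0) then 2 else if e = s(L7 0, R7 0) then 3 else if e = s(L7 1, R7 1) then 4 else if e = s(L7 2, R7 2) then 3 else if e = s(L7 3, R7 3) then 0 else if e = s(L7 4, R7 4) then 2 else if e = s(L7 5, R7 5) then 3 else if e = s(L7 6, R7 6) then 4 else 0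

def cS7_4 : Sym2 (Fin 7 ⊕ Fin 7) → Fin 5 := fun e =>
  if e = s(L7 0, L7 1) then 0 else if e = s(L7 1, L7 2) then 1 else if e = s(L7 2, L7 3) then 2 else if e = s(L7 3, L7 4) then 0 else if e = s(L7 5, L7 6) then 1 else if e = s(L7 6, L7 0) then 2 else if e = s(L7 0, R7 0) then 3 else if e = s(L7 1, R7 1) then 4 else if e = s(L7 2, R7 2) then 3 else if e = s(L7 3, R7 3) then 4 else if e = s(L7 4, R7 4) then 1 else if e = s(L7 5, R7 5) then 0 else if e = s(L7 6, R7 6) then 4 else 0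

def cS7_5 : Sym2 (Fin 7 ⊕ Fin 7) → Fin 5 := fun e =>
  if e = s(L7 0, L7 1) then 0 else if e = s(L7 1, L7 2) then 1 else if e = s(L7 2, L7 3) then 2 else if e = s(L7 3, L7 4) then 0 else if e = s(L7 4, L7 5) then 1 else if e = s(L7 6, L7 0) then 2 else if e = s(L7 0, R7 0) then 3 else if e = s(L7 1, R7 1) then 4 else if e = s(L7 2, R7 2) then 3 else if e = s(L7 3, R7 3) then 4 else if e = s(L7 4, R7 4) then 3 else if e = s(L7 5, R7 5) then 2 else if e = s(L7 6, R7 6) then 1 else 0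

def cS7_6 : Sym2 (Fin 7 ⊕ Fin 7) → Fin 5 := fun e =>
  if e = s(L7 0, L7 1) then 0 else if e = s(L7 1, L7 2) then 1 else if e = s(L7 2, L7 3) then 2 else if e = s(L7 3, L7 4) then 0 else if e = s(L7 4, L7 5) then 1 else if e = s(L7 5, L7 6) then 2 else if e = s(L7 0, R7 0) then 2 else if e = s(L7 1, R7 1) then 3 else if e = s(L7 2, R7 2) then 4 else if e = s(L7 3, R7 3) then 3 else if e = s(L7 4, R7 4) then 4 else if e = s(L7 5, R7 5) then 3 else if e = s(L7 6, R7 6) then 0 else 0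

def cS7_7 : Sym2 (Fin 7 ⊕ Fin 7) → Fin 5 := fun e =>
  if e = s(L7 0, L7 1) then 0 else if e = s(L7 1, L7 2) then 1 else if e = s(L7 2, L7 3) then 2 else if e = s(L7 3, L7 4) then 3 else if e = s(L7 4, L7 5) then 1 else if e = s(L7 5, L7 6) then 2 else if e = s(L7 6, L7 0) then 4 else if e = s(L7 1, R7 1) then 3 else if e = s(L7 2, R7 2) then 4 else if e = s(L7 3, R7 3) then 0 else if e = s(L7 4, R7 4) then 4 else if e = s(L7 5, R7 5) then 0 else if e = s(L7 6, R7 6) then 3 else 0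

def cS7_8 : Sym2 (Fin 7 ⊕ Fin 7) → Fin 5 := fun e =>
  if e = s(L7 0, L7 1) then 0 else if e = s(L7 1, L7 2) then 1 else if e = s(L7 2, L7 3) then 2 else if e = s(L7 3, L7 4) then 3 else if e = s(L7 4, L7 5) then 4 else if e = s(L7 5, L7 6) then 2 else if e = s(L7 6, L7 0) then 3 else if e = s(L7 0, R7 0) then 4 else if e = s(L7 2, R7 2) then 4 else if e = s(L7 3, R7 3) then 0 else if e = s(L7 4, R7 4) then 1 else if e = s(L7 5, R7 5) then 0 else if e = s(L7 6, R7 6) then 1 else 0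

def cS7_9 : Sym2 (Fin 7 ⊕ Fin 7) → Fin 5 := fun e =>
  if e = s(L7 0, L7 1) then 0 else if e = s(L7 1, L7 2) then 1 else if e = s(L7 2, L7 3) then 2 else if e = s(L7 3, L7 4) then 3 else if e = s(L7 4, L7 5) then 0 else if e = s(L7 5, L7 6) then 4 else if e = s(L7 6, L7 0) then 3 else if e = s(L7 0, R7 0) then 2 else if e = s(L7 1, R7 1) then 4 else if e = s(L7 3, R7 3) then 4 else if e = s(L7 4, R7 4) then 1 else if e = s(L7 5, R7 5) then 2 else if e = s(L7 6, R7 6) then 1 else 0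

def cS7_10 : Sym2 (Fin 7 ⊕ Fin 7) → Fin 5 := fun e =>
  if e = s(L7 0, L7 1) then 0 else if e = s(L7 1, L7 2) then 1 else if e = s(L7 2, L7 3) then 2 else if e = s(L7 3, L7 4) then 3 else if e = s(L7 4, L7 5) then 0 else if e = s(L7 5, L7 6) then 1 else if e = s(L7 6, L7 0) then 4 else if e = s(L7 0, R7 0) then 2 else if e = s(L7 1, R7 1) then 3 else if e = s(L7 2, R7 2) then 4 else if e = s(L7 4, R7 4) then 4 else if e = s(L7 5, R7 5) then 2 else if e = s(L7 6, R7 6) then 3 else 0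

def cS7_11 : Sym2 (Fin 7 ⊕ Fin 7) → Fin 5 := fun e =>
  if e = s(L7 0, L7 1) then 0 else if e = s(L7 1, L7 2) then 1 else if e = s(L7 2, L7 3) then 2 else if e = s(L7 3, L7 4) then 3 else if e = s(L7 4, L7 5) then 4 else if e = s(L7 5, L7 6) then 1 else if e = s(L7 6, L7 0) then 2 else if e = s(L7 0, R7 0) then 4 else if e = s(L7 1, R7 1) then 3 else if e = s(L7 2, R7 2) then 4 else if e = s(L7 3, R7 3) then 0 else if e = s(L7 5, R7 5) then 0 else if e = s(L7 6, R7 6) then 3 else 0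

def cS7_12 : Sym2 (Fin 7 ⊕ Fin 7) → Fin 5 := fun e =>
  if e = s(L7 0, L7 1) then 0 else if e = s(L7 1, L7 2) then 1 else if e = s(L7 2, L7 3) then 2 else if e = s(L7 3, L7 4) then 0 else if e = s(L7 4, L7 5) then 3 else if e = s(L7 5, L7 6) then 4 else if e = s(L7 6, L7 0) then 2 else if e = s(L7 0, R7 0) then 3 else if e = s(L7 1, R7 1) then 4 else if e = s(L7 2, R7 2) then 3 else if e = s(L7 3, R7 3) then 4 else if e = s(L7 4, R7 4) then 1 else if e = s(L7 6, R7 6) then 1 else 0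

def cS7_13 : Sym2 (Fin 7 ⊕ Fin 7) → Fin 5 := fun e =>
  if e = s(L7 0, L7 1) then 0 else if e = s(L7 1, L7 2) then 1 else if e = s(L7 2, L7 3) then 2 else if e = s(L7 3, L7 4) then 0 else if e = s(L7 4, L7 5) then 1 else if e = s(L7 5, L7 6) then 3 else if e = s(L7 6, L7 0) then 4 else if e = s(L7 0, R7 0) then 2 else if e = s(L7 1, R7 1) then 3 else if e = s(L7 2, R7 2) then 4 else if e = s(L7 3, R7 3) then 3 else if e = s(L7 4, R7 4) then 4 else if e = s(L7 5, R7 5) then 2 else 0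

theorem stmt7 :
    (∀ e ∈ (Sgraph 3).edgeSet, strongChromaticIndex ((Sgraph 3).deleteEdges {e}) ≤ 5) ∧
    (∀ e ∈ S4graph.edgeSet, strongChromaticIndex (S4graph.deleteEdges {e}) ≤ 5) ∧
    (∀ e ∈ (Sgraph 7).edgeSet, strongChromaticIndex ((Sgraph 7).deleteEdges {e}) ≤ 5) := by
  refine ⟨?_, ?_, ?_⟩
  · intro e he
    have hm := (hES3 e).2 he
    simp only [Finset.mem_insert, Finset.mem_singleton, ES3] at hm
    rcases hm with rfl|rfl|rfl|rfl|rfl|rfl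
    · exact sci_le5 _ cS3_0 (strong_of_erase _ ES3 hES3 s(L3 0, L3 1) cS3_0 (by decide))
    · exact sci_le5 _ cS3_1 (strong_of_erase _ ES3 hES3 s(L3 1, L3 2) cS3_1 (by decide))
    · exact sci_le5 _ cS3_2 (strong_of_erase _ ES3 hES3 s(L3 2, L3 0) cS3_2 (by decide))
    · exact sci_le5 _ cS3_3 (strong_of_erase _ ES3 hES3 s(L3 0, R3 0) cS3_3 (by decide))
    · exact sci_le5 _ cS3_4 (strong_of_erase _ ES3 hES3 s(L3 1, R3 1) cS3_4 (by decide))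
    · exact sci_le5 _ cS3_5 (strong_of_erase _ ES3 hES3 s(L3 2, R3 2) cS3_5 (by decide))
  · intro e he
    have hm := (hES4 e).2 he
    simp only [Finset.mem_insert, Finset.mem_singleton, ES4] at hm
    rcases hm with rfl|rfl|rfl|rfl|rfl|rfl
    · exact sci_le5 _ cS4_0 (strong_of_erase _ ES4 hES4 s(0, 1) cS4_0 (by decide))
    · exact sci_le5 _ cS4_1 (strong_of_erase _ ES4 hES4 s(1, 2) cS4_1 (by decide))
    · exact sci_le5 _ cS4_2 (strong_of_erase _ ES4 hES4 s(2, 3) cS4_2 (by decide))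
    · exact sci_le5 _ cS4_3 (strong_of_erase _ ES4 hES4 s(3, 0) cS4_3 (by decide))
    · exact sci_le5 _ cS4_4 (strong_of_erase _ ES4 hES4 s(0, 4) cS4_4 (by decide))
    · exact sci_le5 _ cS4_5 (strong_of_erase _ ES4 hES4 s(1, 5) cS4_5 (by decide))
  · intro e he
    have hm := (hES7 e).2 he
    simp only [Finset.mem_insert, Finset.mem_singleton, ES7] at hm
    rcases hm with rfl|rfl|rfl|rfl|rfl|rfl|rfl|rfl|rfl|rfl|rfl|rfl|rfl|rfl
    · exact sci_le5 _ cS7_0 (strong_of_erase _ ES7 hES7 s(L7 0, L7 1) cS7_0 (by decide))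
    · exact sci_le5 _ cS7_1 (strong_of_erase _ ES7 hES7 s(L7 1, L7 2) cS7_1 (by decide))
    · exact sci_le5 _ cS7_2 (strong_of_erase _ ES7 hES7 s(L7 2, L7 3) cS7_2 (by decide))
    · exact sci_le5 _ cS7_3 (strong_of_erase _ ES7 hES7 s(L7 3, L7 4) cS7_3 (by decide))
    · exact sci_le5 _ cS7_4 (strong_of_erase _ ES7 hES7 s(L7 4, L7 5) cS7_4 (by decide))
    · exact sci_le5 _ cS7_5 (strong_of_erase _ ES7 hES7 s(L7 5, L7 6) cS7_5 (by decide))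
    · exact sci_le5 _ cS7_6 (strong_of_erase _ ES7 hES7 s(L7 6, L7 0) cS7_6 (by decide))
    · exact sci_le5 _ cS7_7 (strong_of_erase _ ES7 hES7 s(L7 0, R7 0) cS7_7 (by decide))
    · exact sci_le5 _ cS7_8 (strong_of_erase _ ES7 hES7 s(L7 1, R7 1) cS7_8 (by decide))
    · exact sci_le5 _ cS7_9 (strong_of_erase _ ES7 hES7 s(L7 2, R7 2) cS7_9 (by decide))
    · exact sci_le5 _ cS7_10 (strong_of_erase _ ES7 hES7 s(L7 3, R7 3) cS7_10 (by decide))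
    · exact sci_le5 _ cS7_11 (strong_of_erase _ ES7 hES7 s(L7 4, R7 4) cS7_11 (by decide))
    · exact sci_le5 _ cS7_12 (strong_of_erase _ ES7 hES7 s(L7 5, R7 5) cS7_12 (by decide))
    · exact sci_le5 _ cS7_13 (strong_of_erase _ ES7 hES7 s(L7 6, R7 6) cS7_13 (by decide))
end

section
/- For each n ∈ {5, 6, 8}, the graph S_n admits a strong edge-coloring using 5 colors; that is, χ'_s(S_n) ≤ 5. -/
open SimpleGraph

/-- The edges of `Sgraph k`, indexed by `Fin k × Bool`. -/
def sEdge (k : ℕ) [NeZero k] (a : Fin k × Bool) : Sym2 (Fin k ⊕ Fin k) :=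
  if a.2 then s(Sum.inl a.1, Sum.inr a.1) else s(Sum.inl a.1, Sum.inl (a.1 + 1))

def sShare {V : Type*} (e₁ e₂ : Sym2 V) : Prop := ∃ v, v ∈ e₁ ∧ v ∈ e₂

instance {V : Type*} [DecidableEq V] [Fintype V] (e₁ e₂ : Sym2 V) :
    Decidable (sShare e₁ e₂) := Fintype.decidableExistsFintype

theorem sEdge_mem {k : ℕ} [NeZero k] {e : Sym2 (Fin k ⊕ Fin k)}
    (h : e ∈ (Sgraph k).edgeSet) : ∃ a : Fin k × Bool, e = sEdge k a := by
  rw [Sgraph, SimpleGraph.edgeSet_fromEdgeSet] at h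
  obtain ⟨⟨i, h | h⟩, -⟩ := h
  · exact ⟨(i, false), by simpa [sEdge] using h⟩
  · exact ⟨(i, true), by simpa [sEdge] using h⟩

theorem sKey (k : ℕ) [NeZero k] (c : Sym2 (Fin k ⊕ Fin k) → Fin 5)
    (hQ : ∀ a b : Fin k × Bool, sEdge k a ≠ sEdge k b →
      (sShare (sEdge k a) (sEdge k b) ∨
        ∃ d : Fin k × Bool, sShare (sEdge k a) (sEdge k d) ∧ sShare (sEdge k b) (sEdge k d)) →
      c (sEdge k a) ≠ c (sEdge k b)) :
    strongChromaticIndex (Sgraph k) ≤ 5 := by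
  refine sInf_le ⟨5, by norm_num, c, ?_⟩
  rintro e₁ e₂ ⟨h1, h2, hne, hconf⟩
  obtain ⟨a, rfl⟩ := sEdge_mem h1
  obtain ⟨b, rfl⟩ := sEdge_mem h2
  apply hQ a b hne
  rcases hconf with h | ⟨e₃, he₃, -, -, s1, s2⟩
  · exact Or.inl h
  · obtain ⟨d, rfl⟩ := sEdge_mem he₃
    exact Or.inr ⟨d, s1, s2⟩

def sF5 : (Fin 5 ⊕ Fin 5) → (Fin 5 ⊕ Fin 5) → Fin 5 := fun a b =>
  match a, b with
  | .inl i, .inl j =>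
      if j = i + 1 then ![0,1,2,3,4] i else if i = j + 1 then ![0,1,2,3,4] j else 0
  | .inl _, .inr j => ![2,3,4,0,1] j
  | .inr j, .inl _ => ![2,3,4,0,1] j
  | .inr _, .inr _ => 0

def sC5 : Sym2 (Fin 5 ⊕ Fin 5) → Fin 5 := Sym2.lift ⟨sF5, by decide⟩

def sF6 : (Fin 6 ⊕ Fin 6) → (Fin 6 ⊕ Fin 6) → Fin 5 := fun a b =>
  match a, b with
  | .inl i, .inl j =>
      if j = i + 1 then ![0,1,2,0,1,2] i else if i = j + 1 then ![0,1,2,0,1,2] j else 0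
  | .inl _, .inr j => ![3,4,3,4,3,4] j
  | .inr j, .inl _ => ![3,4,3,4,3,4] j
  | .inr _, .inr _ => 0

def sC6 : Sym2 (Fin 6 ⊕ Fin 6) → Fin 5 := Sym2.lift ⟨sF6, by decide⟩

def sF8 : (Fin 8 ⊕ Fin 8) → (Fin 8 ⊕ Fin 8) → Fin 5 := fun a b =>
  match a, b with
  | .inl i, .inl j =>
      if j = i + 1 then ![0,1,2,0,3,2,1,3] i else if i = j + 1 then ![0,1,2,0,3,2,1,3] j else 0
  | .inl _, .inr j => ![2,4,3,4,1,4,0,4] j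
  | .inr j, .inl _ => ![2,4,3,4,1,4,0,4] j
  | .inr _, .inr _ => 0

def sC8 : Sym2 (Fin 8 ⊕ Fin 8) → Fin 5 := Sym2.lift ⟨sF8, by decide⟩

theorem stmt19 :
    strongChromaticIndex (Sgraph 5) ≤ 5 ∧
    strongChromaticIndex (Sgraph 6) ≤ 5 ∧
    strongChromaticIndex (Sgraph 8) ≤ 5 := by
  refine ⟨sKey 5 sC5 (by decide), sKey 6 sC6 (by decide), sKey 8 sC8 (by decide)⟩
end
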